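/- Assume the eigenvalues are strictly ordered t_1 > t_2 > ⋯ > t_n. Let μ ∈ ℝ and 1 ≤ i < m with t_i ≠ μ. Then the second-order truncation error satisfies ‖Σ_{k=m+1}^{n} (⟨E v_i, v_k⟩/(t_i − t_k)) v_k − [ (1/(t_i − μ)) r_i − (μ/(t_i − μ)²) r_i + (1/(t_i − μ)²) A' r_i ]‖ ≤ (Σ_{k=m+1}^{n} |t_k − μ|²) · ‖E‖₂ / (|t_i − t_m| · |t_i − μ|²). -/

import Mathlib

open Matrix Finset

-- auxiliary: completeness of an orthonormal family of n vectors in ℝ^n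
lemma onb_complete {n : ℕ} (v : Fin n → Fin n → ℝ)
    (hortho : ∀ k l : Fin n, v k ⬝ᵥ v l = if k = l then 1 else 0)
    (w : Fin n → ℝ) : ∑ k, (v k ⬝ᵥ w) • v k = w := by
  classical
  set P : Matrix (Fin n) (Fin n) ℝ := Matrix.of v with hP
  have h1 : P * Pᵀ = 1 := by
    ext k l
    simpa [Matrix.mul_apply, dotProduct, Matrix.one_apply, hP] using hortho k l
  have h2 : Pᵀ * P = 1 := mul_eq_one_comm.mp h1
  have h3 : (Pᵀ * P).mulVec w = w := by rw [h2, Matrix.one_mulVec]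
  funext p
  have h4 : (Pᵀ * P).mulVec w p = ∑ k, (v k ⬝ᵥ w) * v k p := by
    simp only [Matrix.mulVec, Matrix.mul_apply, dotProduct, Matrix.transpose_apply,
      Matrix.of_apply, hP, Finset.sum_mul]
    rw [Finset.sum_comm]
    exact Finset.sum_congr rfl fun k _ => Finset.sum_congr rfl fun q _ => by ring
  calc (∑ k, (v k ⬝ᵥ w) • v k) p = ∑ k, (v k ⬝ᵥ w) * v k p := by
        simp [Finset.sum_apply]
    _ = w p := by rw [← h4, h3]

/-- Error bound for the second-order truncated perturbation formula. -/
theorem second_order_truncation_error_bound {n m : ℕ} (hm1 : 1 ≤ m) (hmn : m ≤ n)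
    (A' E : Matrix (Fin n) (Fin n) ℝ) (hA' : A'.IsSymm) (hE : E.IsSymm)
    (t : Fin n → ℝ) (v : Fin n → Fin n → ℝ)
    (hortho : ∀ k l : Fin n, v k ⬝ᵥ v l = if k = l then 1 else 0)
    (heig : ∀ k : Fin n, A'.mulVec (v k) = t k • v k)
    (hord : ∀ k l : Fin n, k < l → t l < t k)
    (V : Matrix (Fin n) (Fin m) ℝ)
    (hV : ∀ (p : Fin n) (j : Fin m), V p j = v (Fin.castLE hmn j) p)
    (i : Fin n) (hi : (i : ℕ) + 1 < m)
    (r : Fin n → ℝ)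
    (hr : r = ((1 : Matrix (Fin n) (Fin n) ℝ) - V * Vᵀ).mulVec (E.mulVec (v i)))
    (μ : ℝ) (hμ : t i ≠ μ) :
    ‖(WithLp.equiv 2 (Fin n → ℝ)).symm
        ((∑ k ∈ Finset.univ.filter (fun k : Fin n => m ≤ (k : ℕ)),
            ((E.mulVec (v i) ⬝ᵥ v k) / (t i - t k)) • v k)
          - ((1 / (t i - μ)) • r - (μ / (t i - μ) ^ 2) • r
              + (1 / (t i - μ) ^ 2) • A'.mulVec r))‖ ≤
      (∑ k ∈ Finset.univ.filter (fun k : Fin n => m ≤ (k : ℕ)), |t k - μ| ^ 2)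
        * ‖Matrix.toEuclideanCLM (𝕜 := ℝ) E‖
        / (|t i - t ⟨m - 1, by omega⟩| * |t i - μ| ^ 2) := by
  classical
  set S : Finset (Fin n) := Finset.univ.filter (fun k : Fin n => m ≤ (k : ℕ)) with hS
  set c : Fin n → ℝ := fun k => E.mulVec (v i) ⬝ᵥ v k with hc
  set w : Fin n → ℝ := E.mulVec (v i) with hw
  have ha : t i - μ ≠ 0 := sub_ne_zero.mpr hμ
  -- r = ∑ k ∈ S, c k • v k
  have hwexp : ∑ k, c k • v k = w := by
    simpa [hc, dotProduct_comm] using onb_complete v hortho w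
  have hVVw : (V * Vᵀ).mulVec w
      = ∑ j : Fin m, (v (Fin.castLE hmn j) ⬝ᵥ w) • v (Fin.castLE hmn j) := by
    funext p
    simp only [Matrix.mulVec, Matrix.mul_apply, dotProduct, Matrix.transpose_apply, hV,
      Finset.sum_mul, Finset.sum_apply, Pi.smul_apply, smul_eq_mul]
    rw [Finset.sum_comm]
    exact Finset.sum_congr rfl fun j _ => Finset.sum_congr rfl fun q _ => by ring
  have hreindex : ∑ j : Fin m, (v (Fin.castLE hmn j) ⬝ᵥ w) • v (Fin.castLE hmn j)
      = ∑ k ∈ Finset.univ.filter (fun k : Fin n => (k : ℕ) < m), c k • v k := by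
    refine Finset.sum_bij (fun (j : Fin m) _ => Fin.castLE hmn j) ?_ ?_ ?_ ?_
    · intro j _
      simp [Fin.castLE, j.isLt]
    · intro j1 _ j2 _ h
      exact Fin.castLE_injective hmn h
    · intro k hk
      simp only [Finset.mem_filter, Finset.mem_univ, true_and] at hk
      exact ⟨⟨(k : ℕ), hk⟩, Finset.mem_univ _, rfl⟩
    · intro j _
      rw [hc, dotProduct_comm]
  have hr' : r = ∑ k ∈ S, c k • v k := by
    have hsplit := Finset.sum_filter_add_sum_filter_not Finset.univ
      (fun k : Fin n => (k : ℕ) < m) (fun k => c k • v k)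
    have hnot : Finset.univ.filter (fun k : Fin n => ¬ (k : ℕ) < m) = S := by
      simp [hS, not_lt]
    rw [hr, Matrix.sub_mulVec, Matrix.one_mulVec, hVVw, hreindex]
    rw [hnot] at hsplit
    rw [← hwexp, ← hsplit]
    abel
  -- A' r
  have hAr : A'.mulVec r = ∑ k ∈ S, (c k * t k) • v k := by
    rw [hr']
    rw [show A'.mulVec (∑ k ∈ S, c k • v k) = ∑ k ∈ S, A'.mulVec (c k • v k) from
      map_sum A'.mulVecLin _ _]
    exact Finset.sum_congr rfl fun k _ => by
      rw [Matrix.mulVec_smul, heig k, smul_smul]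
  -- combine into a single sum
  set d : Fin n → ℝ := fun k => c k / (t i - t k)
    - (1 / (t i - μ) * c k - μ / (t i - μ) ^ 2 * c k + 1 / (t i - μ) ^ 2 * (c k * t k))
    with hd
  have key : (∑ k ∈ S, (c k / (t i - t k)) • v k)
      - ((1 / (t i - μ)) • r - (μ / (t i - μ) ^ 2) • r + (1 / (t i - μ) ^ 2) • A'.mulVec r)
      = ∑ k ∈ S, d k • v k := by
    rw [hAr, hr', Finset.smul_sum, Finset.smul_sum, Finset.smul_sum,
      ← Finset.sum_sub_distrib, ← Finset.sum_add_distrib, ← Finset.sum_sub_distrib]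
    refine Finset.sum_congr rfl fun k _ => ?_
    rw [hd]
    module
  -- pass to EuclideanSpace
  set T := Matrix.toEuclideanCLM (𝕜 := ℝ) E with hT
  set e : Fin n → EuclideanSpace ℝ (Fin n) := fun k => (WithLp.equiv 2 (Fin n → ℝ)).symm (v k)
    with he
  have hne : ∀ k, ‖e k‖ = 1 := by
    intro k
    rw [he, EuclideanSpace.norm_eq]
    have h1 : ∑ p, ‖v k p‖ ^ 2 = v k ⬝ᵥ v k := by
      simp [dotProduct, Real.norm_eq_abs, sq_abs, pow_two]
    simp only [WithLp.equiv_symm_apply, WithLp.ofLp_toLp]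
    rw [h1, hortho k k, if_pos rfl, Real.sqrt_one]
  have hc_bound : ∀ k, |c k| ≤ ‖T‖ := by
    intro k
    have hTe : T (e i) = (WithLp.equiv 2 (Fin n → ℝ)).symm w := by
      rw [hT, he]
      rw [hw]; exact Matrix.toEuclideanCLM_toLp E (v i)
    have hinner : c k = inner ℝ ((WithLp.equiv 2 (Fin n → ℝ)).symm w) (e k) := by
      rw [hc]
      simp [PiLp.inner_apply, RCLike.inner_apply, dotProduct, he,
        WithLp.equiv_symm_apply, mul_comm]
    calc |c k| = |inner ℝ ((WithLp.equiv 2 (Fin n → ℝ)).symm w) (e k)| := by rw [hinner]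
      _ ≤ ‖(WithLp.equiv 2 (Fin n → ℝ)).symm w‖ * ‖e k‖ := abs_real_inner_le_norm _ _
      _ = ‖T (e i)‖ * 1 := by rw [hTe, hne k]
      _ ≤ (‖T‖ * ‖e i‖) * 1 := mul_le_mul_of_nonneg_right (T.le_opNorm (e i)) zero_le_one
      _ = ‖T‖ := by rw [hne i]; ring
  -- index ⟨m-1,_⟩ and positivity
  set i' : Fin n := ⟨m - 1, by omega⟩ with hi'
  have hii' : i < i' := by
    rw [Fin.lt_def]
    simpa [hi'] using (by omega : (i : ℕ) < m - 1)
  have hpos : 0 < t i - t i' := sub_pos.mpr (hord i i' hii')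
  have hapos : 0 < (t i - μ) ^ 2 := by positivity
  have hkey2 : ∀ k ∈ S, t k < t i' := by
    intro k hk
    rw [hS, Finset.mem_filter] at hk
    refine hord i' k ?_
    rw [Fin.lt_def]
    simp only [hi']
    omega
  have hbound : ∀ k ∈ S,
      |d k| ≤ |t k - μ| ^ 2 * ‖T‖ / (|t i - t i'| * |t i - μ| ^ 2) := by
    intro k hk
    have htk : t k < t i := lt_trans (hkey2 k hk) (hord i i' hii')
    have htik : (0:ℝ) < t i - t k := sub_pos.mpr htk
    have htik' : t i - t k ≠ 0 := ne_of_gt htik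
    have hd_eq : d k = c k * ((t k - μ) ^ 2 / ((t i - μ) ^ 2 * (t i - t k))) := by
      rw [hd]
      field_simp
      ring
    have hfrac_nonneg : (0:ℝ) ≤ (t k - μ) ^ 2 / ((t i - μ) ^ 2 * (t i - t k)) := by
      positivity
    have h1 : |d k| = |c k| * ((t k - μ) ^ 2 / ((t i - μ) ^ 2 * (t i - t k))) := by
      rw [hd_eq, abs_mul, abs_of_nonneg hfrac_nonneg]
    have h2 : |c k| * ((t k - μ) ^ 2 / ((t i - μ) ^ 2 * (t i - t k)))
        ≤ ‖T‖ * ((t k - μ) ^ 2 / ((t i - μ) ^ 2 * (t i - t k))) :=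
      mul_le_mul_of_nonneg_right (hc_bound k) hfrac_nonneg
    have h3 : (t k - μ) ^ 2 / ((t i - μ) ^ 2 * (t i - t k))
        ≤ (t k - μ) ^ 2 / ((t i - μ) ^ 2 * (t i - t i')) := by
      refine div_le_div_of_nonneg_left (by positivity) (by positivity) ?_
      have : t i - t k ≥ t i - t i' := by
        have := hkey2 k hk
        linarith
      nlinarith [hapos]
    have h4 : ‖T‖ * ((t k - μ) ^ 2 / ((t i - μ) ^ 2 * (t i - t i')))
        = |t k - μ| ^ 2 * ‖T‖ / (|t i - t i'| * |t i - μ| ^ 2) := by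
      rw [sq_abs, sq_abs, abs_of_pos hpos]
      ring
    calc |d k| = |c k| * ((t k - μ) ^ 2 / ((t i - μ) ^ 2 * (t i - t k))) := h1
      _ ≤ ‖T‖ * ((t k - μ) ^ 2 / ((t i - μ) ^ 2 * (t i - t k))) := h2
      _ ≤ ‖T‖ * ((t k - μ) ^ 2 / ((t i - μ) ^ 2 * (t i - t i'))) :=
          mul_le_mul_of_nonneg_left h3 (norm_nonneg _)
      _ = |t k - μ| ^ 2 * ‖T‖ / (|t i - t i'| * |t i - μ| ^ 2) := h4
  have hcast : (WithLp.equiv 2 (Fin n → ℝ)).symm (∑ k ∈ S, d k • v k)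
      = ∑ k ∈ S, d k • e k := by simp [he, WithLp.equiv_symm_apply, WithLp.toLp_sum]
  rw [key, hcast]
  calc ‖∑ k ∈ S, d k • e k‖ ≤ ∑ k ∈ S, ‖d k • e k‖ := norm_sum_le _ _
    _ = ∑ k ∈ S, |d k| := by
        refine Finset.sum_congr rfl fun k _ => ?_
        rw [norm_smul, hne k, Real.norm_eq_abs, mul_one]
    _ ≤ ∑ k ∈ S, |t k - μ| ^ 2 * ‖T‖ / (|t i - t i'| * |t i - μ| ^ 2) :=
        Finset.sum_le_sum hbound
    _ = (∑ k ∈ S, |t k - μ| ^ 2) * ‖T‖ / (|t i - t i'| * |t i - μ| ^ 2) := by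
        rw [← Finset.sum_div, ← Finset.sum_mul]
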